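/- For every permutation σ ∈ S_n with σ(n) = n, the matrix T P(σ) Tᵗ agrees with the n×n identity matrix in its first two rows and first two columns; that is, (T P(σ) Tᵗ)_{i,j} = δ_{i,j} whenever i ≤ 2 or j ≤ 2. -/

import Mathlib

open Matrix

/-- The n×n matrix `U` from the paper: first row all ones; row `m` (1-based, m≥2)
has entries −1 in columns 1,…,n−m+1, entry n−m+1 in column n−m+2, and 0 afterwards.
Indices are 0-based here, so row `i` corresponds to `m = i+1`. -/
noncomputable def Umat (n : ℕ) : Matrix (Fin n) (Fin n) ℝ :=
  Matrix.of fun i j =>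
    if i.val = 0 then 1
    else if j.val < n - i.val then -1
    else if j.val = n - i.val then ((n : ℝ) - i.val)
    else 0

/-- The diagonal matrix `A` with `A₁₁ = 1/√n` and `A_kk = 1/√((n−k+1)(n−k+2))` for k ≥ 2
(1-based `k = i+1`). -/
noncomputable def Amat (n : ℕ) : Matrix (Fin n) (Fin n) ℝ :=
  Matrix.diagonal fun i =>
    if i.val = 0 then 1 / Real.sqrt n
    else 1 / Real.sqrt (((n : ℝ) - i.val) * ((n : ℝ) - i.val + 1))

/-- The orthogonal transform `T = A U`. -/
noncomputable def Tmat (n : ℕ) : Matrix (Fin n) (Fin n) ℝ := Amat n * Umat n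

/-- The permutation matrix `P(σ)` with `P(σ)_{i,j} = 1` iff `j = σ(i)`. -/
def Pmat (n : ℕ) (σ : Equiv.Perm (Fin n)) : Matrix (Fin n) (Fin n) ℝ :=
  Matrix.of fun i j => if j = σ i then 1 else 0

lemma entry_eq (n : ℕ) (σ : Equiv.Perm (Fin n)) (i j : Fin n) :
    (Tmat n * Pmat n σ * (Tmat n)ᵀ) i j = ∑ k, Tmat n i k * Tmat n j (σ k) := by
  simp only [Matrix.mul_apply, Matrix.transpose_apply, Pmat, Matrix.of_apply,
    mul_ite, mul_one, mul_zero, Finset.sum_mul, ite_mul]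
  rw [Finset.sum_comm]
  simp [Finset.sum_ite_eq']

lemma Urow1 (n : ℕ) (hn : 3 ≤ n) (k : Fin n) :
    Umat n ⟨1, by omega⟩ k = (if k = ⟨n - 1, Nat.sub_one_lt (by omega)⟩ then (n : ℝ) else 0) - 1 := by
  simp only [Umat, Matrix.of_apply, Fin.ext_iff]
  have hk := k.isLt
  split_ifs <;> first | omega | (exfalso; omega) | (push_cast; ring1) | simp_all

lemma Ulast (n : ℕ) (hn : 3 ≤ n) (j : Fin n) :
    Umat n j ⟨n - 1, Nat.sub_one_lt (by omega)⟩ = if j.val = 0 then 1 else if j.val = 1 then (n : ℝ) - 1 else 0 := by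
  simp only [Umat, Matrix.of_apply]
  have hj := j.isLt
  split_ifs <;> first | omega | (exfalso; omega) | (push_cast; ring1) | simp_all

lemma Usum (n : ℕ) (hn : 3 ≤ n) (j : Fin n) :
    ∑ k, Umat n j k = if j.val = 0 then (n : ℝ) else 0 := by
  rcases Nat.eq_zero_or_pos j.val with hj | hj
  · simp [Umat, hj]
  · have hjn := j.isLt
    have h1 : ∀ k : Fin n, Umat n j k =
        (if k = ⟨n - j.val, by omega⟩ then ((n : ℝ) - j.val + 1) else 0)
          - (if k.val ≤ n - j.val then 1 else 0) := by
      intro k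
      simp only [Umat, Matrix.of_apply, Fin.ext_iff]
      have hk := k.isLt
      split_ifs <;> first | omega | (exfalso; omega) | (push_cast; ring1) | simp_all
    rw [Finset.sum_congr rfl fun k _ => h1 k, Finset.sum_sub_distrib,
      Finset.sum_ite_eq']
    have h2 : ∑ k : Fin n, (if k.val ≤ n - j.val then (1:ℝ) else 0)
        = (n - j.val : ℕ) + 1 := by
      rw [Fin.sum_univ_eq_sum_range (fun k => if k ≤ n - j.val then (1:ℝ) else 0)]
      rw [← Finset.sum_filter]
      have : Finset.filter (fun k => k ≤ n - j.val) (Finset.range n)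
          = Finset.range (n - j.val + 1) := by
        ext a; simp [Nat.lt_succ_iff]; omega
      rw [this, Finset.sum_const, Finset.card_range]
      simp
    rw [h2]
    have hle : j.val ≤ n := by omega
    simp only [Finset.mem_univ, if_true, if_neg (by omega : ¬ j.val = 0)]
    push_cast [Nat.cast_sub hle]
    ring

noncomputable def Adiag (n : ℕ) (a : Fin n) : ℝ :=
  if a.val = 0 then 1 / Real.sqrt n
  else 1 / Real.sqrt (((n : ℝ) - a.val) * ((n : ℝ) - a.val + 1))

lemma Tmat_apply (n : ℕ) (a b : Fin n) : Tmat n a b = Adiag n a * Umat n a b := by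
  simp [Tmat, Amat, Adiag, Matrix.diagonal_mul]

lemma Adiag0 (n : ℕ) (h : 0 < n) : Adiag n ⟨0, h⟩ = 1 / Real.sqrt n := by simp [Adiag]

lemma Adiag1 (n : ℕ) (h : 1 < n) :
    Adiag n ⟨1, h⟩ = 1 / Real.sqrt (((n : ℝ) - 1) * ((n : ℝ) - 1 + 1)) := by simp [Adiag]

lemma key (n : ℕ) (hn : 3 ≤ n) (σ : Equiv.Perm (Fin n))
    (hσ : σ ⟨n - 1, Nat.sub_one_lt (by omega)⟩ = ⟨n - 1, Nat.sub_one_lt (by omega)⟩) (i j : Fin n) (hi : i.val ≤ 1) :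
    (Tmat n * Pmat n σ * (Tmat n)ᵀ) i j = if i = j then 1 else 0 := by
  have hlt : n - 1 < n := by omega
  have hσ2 : σ ⟨n - 1, hlt⟩ = ⟨n - 1, hlt⟩ := hσ
  clear hσ
  rw [entry_eq]
  simp only [Tmat_apply]
  have hsum : ∑ k, Adiag n i * Umat n i k * (Adiag n j * Umat n j (σ k))
      = Adiag n i * Adiag n j * ∑ k, Umat n i k * Umat n j (σ k) := by
    rw [Finset.mul_sum]; exact Finset.sum_congr rfl fun k _ => by ring
  rw [hsum]
  have hperm : ∑ k, Umat n j (σ k) = ∑ k, Umat n j k := Equiv.sum_comp σ (Umat n j)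
  have hn0 : (0:ℝ) < n := by positivity
  rcases Nat.lt_or_ge i.val 1 with hi0 | hi1
  · -- i.val = 0
    have hieq : i = ⟨0, by omega⟩ := by apply Fin.ext; show i.val = 0; omega
    have hU : ∀ k, Umat n i k = 1 := by intro k; simp [Umat, hieq]
    simp only [hU, one_mul]
    rw [hperm, Usum n hn j]
    rcases Nat.eq_zero_or_pos j.val with hj | hj
    · have hjeq : i = j := Fin.ext (by omega)
      rw [if_pos (by omega : j.val = 0), if_pos hjeq]
      have hs : Real.sqrt n * Real.sqrt n = n := Real.mul_self_sqrt (le_of_lt hn0)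
      have hsne : Real.sqrt n ≠ 0 := by positivity
      rw [hieq, ← hjeq, hieq, Adiag0 n (by omega)]
      field_simp
      rw [sq]; exact hs.symm
    · rw [if_neg (by omega : ¬ j.val = 0), if_neg (by
        intro h; rw [← h, hieq] at hj; simp at hj)]
      ring
  · -- i.val = 1
    have hieq : i = ⟨1, by omega⟩ := by apply Fin.ext; show i.val = 1; omega
    have hUk : ∀ k : Fin n, Umat n i k * Umat n j (σ k)
        = (if k = ⟨n - 1, hlt⟩ then (n:ℝ) * Umat n j (σ k) else 0) - Umat n j (σ k) := by
      intro k
      rw [hieq, Urow1 n hn]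
      split_ifs <;> ring
    have hbig : (∑ k, Umat n i k * Umat n j (σ k))
        = (n:ℝ) * (if j.val = 0 then 1 else if j.val = 1 then (n : ℝ) - 1 else 0)
          - (if j.val = 0 then (n : ℝ) else 0) := by
      rw [Finset.sum_congr rfl fun k _ => hUk k, Finset.sum_sub_distrib,
        Finset.sum_ite_eq', hperm, Usum n hn j]
      rw [if_pos (Finset.mem_univ _), hσ2, Ulast n hn j]
    rw [hbig]
    rcases Nat.eq_zero_or_pos j.val with hj | hj
    · rw [if_pos hj, if_pos hj, if_neg (by intro h; rw [← h, hieq] at hj; simp at hj)]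
      ring
    · rcases Nat.lt_or_ge j.val 2 with hj1 | hj2
      · -- j.val = 1
        have hjeq : i = j := Fin.ext (by omega)
        rw [if_neg (by omega : ¬ j.val = 0), if_pos (by omega : j.val = 1),
          if_neg (by omega : ¬ j.val = 0), if_pos hjeq]
        rw [hieq, ← hjeq, hieq, Adiag1 n (by omega)]
        have hn3 : (3:ℝ) ≤ (n:ℝ) := by exact_mod_cast hn
        have h1 : Real.sqrt ((n:ℝ) - 1) * Real.sqrt ((n:ℝ) - 1) = (n:ℝ) - 1 :=
          Real.mul_self_sqrt (by linarith)
        have h2 : Real.sqrt (n:ℝ) * Real.sqrt (n:ℝ) = (n:ℝ) := Real.mul_self_sqrt (by linarith)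
        have h1ne : Real.sqrt ((n:ℝ) - 1) ≠ 0 := by
          refine Real.sqrt_ne_zero'.mpr ?_; linarith
        have h2ne : Real.sqrt (n:ℝ) ≠ 0 := by
          refine Real.sqrt_ne_zero'.mpr ?_; linarith
        have key2 : Real.sqrt (((n:ℝ) - 1) * ((n:ℝ) - 1 + 1))
            = Real.sqrt ((n:ℝ) - 1) * Real.sqrt (n:ℝ) := by
          rw [show ((n:ℝ) - 1 + 1) = (n:ℝ) by ring, Real.sqrt_mul (by linarith)]
        rw [key2]
        have hprod : Real.sqrt ((n:ℝ) - 1) * Real.sqrt (n:ℝ)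
            * (Real.sqrt ((n:ℝ) - 1) * Real.sqrt (n:ℝ)) = ((n:ℝ) - 1) * (n:ℝ) := by
          calc Real.sqrt ((n:ℝ) - 1) * Real.sqrt (n:ℝ)
              * (Real.sqrt ((n:ℝ) - 1) * Real.sqrt (n:ℝ))
              = (Real.sqrt ((n:ℝ) - 1) * Real.sqrt ((n:ℝ) - 1))
                * (Real.sqrt (n:ℝ) * Real.sqrt (n:ℝ)) := by ring
            _ = ((n:ℝ) - 1) * (n:ℝ) := by rw [h1, h2]
        field_simp
        linear_combination -hprod
      · rw [if_neg (by omega : ¬ j.val = 0), if_neg (by omega : ¬ j.val = 1),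
          if_neg (by omega : ¬ j.val = 0), if_neg (by
            intro h; rw [← h, hieq] at hj2; simp at hj2)]
        ring

/-- For every σ ∈ Sₙ with σ(n) = n, the matrix T P(σ) Tᵗ agrees with
the identity in its first two rows and first two columns. -/
theorem stmt_13 (n : ℕ) (hn : 3 ≤ n) (σ : Equiv.Perm (Fin n))
    (hσ : σ ⟨n - 1, by omega⟩ = ⟨n - 1, by omega⟩) (i j : Fin n)
    (hij : i.val ≤ 1 ∨ j.val ≤ 1) :
    (Tmat n * Pmat n σ * (Tmat n)ᵀ) i j = if i = j then 1 else 0 := by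
  rcases hij with hi | hj
  · exact key n hn σ hσ i j hi
  · have hσ' : σ⁻¹ ⟨n - 1, by omega⟩ = ⟨n - 1, by omega⟩ := by
      rw [Equiv.Perm.inv_eq_iff_eq]; exact hσ.symm
    have hPT' : (Pmat n σ⁻¹)ᵀ = Pmat n σ := by
      ext a b
      simp only [Matrix.transpose_apply, Pmat, Matrix.of_apply]
      congr 1
      simp only [eq_iff_iff]
      constructor
      · intro h; rw [h]; simp
      · intro h; rw [h]; simp
    have h2 : (Tmat n * Pmat n σ⁻¹ * (Tmat n)ᵀ)ᵀ = Tmat n * Pmat n σ * (Tmat n)ᵀ := by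
      rw [Matrix.transpose_mul, Matrix.transpose_mul, Matrix.transpose_transpose,
        hPT', ← Matrix.mul_assoc]
    have hkey := key n hn σ⁻¹ hσ' j i hj
    rw [← h2, Matrix.transpose_apply, hkey]
    simp [eq_comm]
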